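/- arXiv:2308.13925 — 2 statements merged into one kernel-verified Lean document; each statement's English description precedes it below -/
import Mathlib

section
/- Let f : ℂ^{n+1} → ℂ be a polynomial function and let k be a positive integer. Set X_k = {(w,z) ∈ ℂ × ℂ^{n+1} : w^k · f(z) = 1} and X_1 = {(w,z) ∈ ℂ × ℂ^{n+1} : w · f(z) = 1}, each with the subspace topology. Then the map p : X_k → X_1 given by p(w,z) = (w^k, z) is a covering map, and every fiber of p has exactly k elements. -/
open MvPolynomial

/-- The affine variety `V(w^k · f - 1) ⊂ ℂ × ℂ^{n+1}`, with the subspace topology. -/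
def Xf (n : ℕ) (f : MvPolynomial (Fin (n + 1)) ℂ) (k : ℕ) : Type _ :=
  {p : ℂ × (Fin (n + 1) → ℂ) // p.1 ^ k * MvPolynomial.eval p.2 f = 1}

noncomputable instance (n : ℕ) (f : MvPolynomial (Fin (n + 1)) ℂ) (k : ℕ) :
    TopologicalSpace (Xf n f k) :=
  instTopologicalSpaceSubtype

/-- The map `X_k → X_1`, `(w, z) ↦ (w^k, z)`. -/
def coverProj (n : ℕ) (f : MvPolynomial (Fin (n + 1)) ℂ) (k : ℕ) :
    Xf n f k → Xf n f 1 :=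
  fun q => ⟨(q.1.1 ^ k, q.1.2), by
    have h := q.2
    simpa [pow_one] using h⟩

section CoverAuxSection
open Complex
namespace CoverAux

variable {n : ℕ} {f : MvPolynomial (Fin (n + 1)) ℂ} {k : ℕ}

lemma w_ne_zero (x : Xf n f 1) : x.1.1 ≠ 0 := by
  intro h
  have h2 := x.2
  rw [h] at h2
  simp at h2

lemma v_ne_zero (hk : 0 < k) (q : Xf n f k) : q.1.1 ≠ 0 := by
  intro h
  have h2 := q.2
  rw [h, zero_pow hk.ne'] at h2
  simp at h2

lemma continuous_coverProj : Continuous (coverProj n f k) := by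
  apply Continuous.subtype_mk
  exact ((continuous_subtype_val.fst.pow k).prodMk continuous_subtype_val.snd)

-- fixed root family
variable (hk : 0 < k) (x₀ : Xf n f 1)

noncomputable def c0 (hk : 0 < k) (x₀ : Xf n f 1) : ℂ :=
  Classical.choose (IsAlgClosed.exists_pow_nat_eq x₀.1.1 hk)

lemma c0_pow (hk : 0 < k) (x₀ : Xf n f 1) : (c0 hk x₀) ^ k = x₀.1.1 :=
  Classical.choose_spec (IsAlgClosed.exists_pow_nat_eq x₀.1.1 hk)

lemma c0_ne_zero (hk : 0 < k) (x₀ : Xf n f 1) : c0 hk x₀ ≠ 0 := by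
  intro h
  apply w_ne_zero x₀
  rw [← c0_pow hk x₀, h, zero_pow hk.ne']

/-- local k-th root -/
noncomputable def rt (hk : 0 < k) (x₀ : Xf n f 1) (w : ℂ) : ℂ :=
  c0 hk x₀ * Complex.exp (Complex.log (w / x₀.1.1) / k)

def V (x₀ : Xf n f 1) : Set ℂ := {w : ℂ | w / x₀.1.1 ∈ slitPlane}

lemma isOpen_V (x₀ : Xf n f 1) : IsOpen (V x₀) :=
  isOpen_slitPlane.preimage (continuous_id.div_const _)

lemma mem_V (x₀ : Xf n f 1) : x₀.1.1 ∈ V x₀ := by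
  simp [V, div_self (w_ne_zero x₀)]

lemma rt_ne_zero (w : ℂ) : rt hk x₀ w ≠ 0 :=
  mul_ne_zero (c0_ne_zero hk x₀) (Complex.exp_ne_zero _)

lemma rt_pow {w : ℂ} (hw : w ∈ V x₀) : (rt hk x₀ w) ^ k = w := by
  have hne : w / x₀.1.1 ≠ 0 := slitPlane_ne_zero hw
  have : (Complex.exp (Complex.log (w / x₀.1.1) / k)) ^ k = w / x₀.1.1 := by
    rw [← Complex.exp_nat_mul]
    rw [mul_div_cancel₀ _ (by exact_mod_cast hk.ne' : (k : ℂ) ≠ 0)]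
    exact Complex.exp_log hne
  rw [rt, mul_pow, this, c0_pow, mul_div_cancel₀ _ (w_ne_zero x₀)]

lemma continuousOn_rt : ContinuousOn (rt hk x₀) (V x₀) := by
  intro w hw
  apply ContinuousAt.continuousWithinAt
  have h1 : ContinuousAt (fun w : ℂ => w / x₀.1.1) w := continuousAt_id.div_const _
  have h2 : ContinuousAt Complex.log (w / x₀.1.1) := continuousAt_clog hw
  have h3 : ContinuousAt (fun w : ℂ => Complex.log (w / x₀.1.1)) w := ContinuousAt.comp (f := fun w : ℂ => w / x₀.1.1) h2 h1
  have h4 : ContinuousAt (fun w : ℂ => Complex.log (w / x₀.1.1) / (k : ℂ)) w := h3.div_const _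
  have h5 := h4.cexp
  exact continuousAt_const.mul h5


lemma finite_roots (hk : 0 < k) : Finite {ζ : ℂ // ζ ^ k = 1} := by
  have h : {ζ : ℂ | ζ ^ k = 1}.Finite :=
    Set.Finite.ofFinset (Polynomial.nthRootsFinset k (1 : ℂ))
      (by intro x; simp [Polynomial.mem_nthRootsFinset hk])
  exact h.to_subtype

lemma card_roots (hk : 0 < k) : Nat.card {ζ : ℂ // ζ ^ k = 1} = k := by
  have hset : {ζ : ℂ | ζ ^ k = 1} = ↑(Polynomial.nthRootsFinset k (1 : ℂ)) := by
    ext x; simp [Polynomial.mem_nthRootsFinset hk]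
  have h1 : Nat.card {ζ : ℂ // ζ ^ k = 1} = ({ζ : ℂ | ζ ^ k = 1}).ncard :=
    Nat.card_coe_set_eq _
  rw [h1, hset, Set.ncard_coe_finset,
    (Complex.isPrimitiveRoot_exp k hk.ne').card_nthRootsFinset]

/-- The local trivialization of `coverProj` around `x₀`. -/
noncomputable def trivAt (hk : 0 < k) (x₀ : Xf n f 1) :
    Bundle.Trivialization {ζ : ℂ // ζ ^ k = 1} (coverProj n f k) where
  toFun q := (coverProj n f k q,
    if h : (q.1.1 / rt hk x₀ (q.1.1 ^ k)) ^ k = 1 then ⟨_, h⟩ else ⟨1, one_pow k⟩)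
  invFun p :=
    if h : (p.2.1 * rt hk x₀ p.1.1.1) ^ k * MvPolynomial.eval p.1.1.2 f = 1 then
      ⟨(p.2.1 * rt hk x₀ p.1.1.1, p.1.1.2), h⟩
    else ⟨(c0 hk x₀, x₀.1.2), by rw [c0_pow]; simpa [pow_one] using x₀.2⟩
  source := coverProj n f k ⁻¹' {x : Xf n f 1 | x.1.1 ∈ V x₀}
  target := {x : Xf n f 1 | x.1.1 ∈ V x₀} ×ˢ Set.univ
  map_source' q hq := Set.mk_mem_prod hq (Set.mem_univ _)
  map_target' := by
    rintro ⟨x, ζ⟩ ⟨hx, -⟩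
    have hcond : (ζ.1 * rt hk x₀ x.1.1) ^ k * MvPolynomial.eval x.1.2 f = 1 := by
      rw [mul_pow, ζ.2, one_mul, rt_pow hk x₀ hx]
      simpa [pow_one] using x.2
    erw [Set.mem_preimage, dif_pos hcond]
    show (ζ.1 * rt hk x₀ x.1.1) ^ k ∈ V x₀
    rw [mul_pow, ζ.2, one_mul, rt_pow hk x₀ hx]
    exact hx
  left_inv' := by
    rintro ⟨⟨v, z⟩, hq⟩ hmem
    have hv : v ≠ 0 := v_ne_zero hk ⟨(v, z), hq⟩
    have hVk : v ^ k ∈ V x₀ := hmem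
    have hrne : rt hk x₀ (v ^ k) ≠ 0 := rt_ne_zero hk x₀ _
    have hcond : (v / rt hk x₀ (v ^ k)) ^ k = 1 := by
      rw [div_pow, rt_pow hk x₀ hVk, div_self (pow_ne_zero k hv)]
    erw [dif_pos hcond]
    have hval : v / rt hk x₀ (v ^ k) * rt hk x₀ ((coverProj n f k ⟨(v, z), hq⟩).1.1) = v := by
      show v / rt hk x₀ (v ^ k) * rt hk x₀ (v ^ k) = v
      exact div_mul_cancel₀ v hrne
    have hcond2 : (v / rt hk x₀ (v ^ k) * rt hk x₀ ((coverProj n f k ⟨(v, z), hq⟩).1.1)) ^ k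
        * MvPolynomial.eval ((coverProj n f k ⟨(v, z), hq⟩).1.2) f = 1 := by
      rw [hval]; exact hq
    erw [dif_pos hcond2]
    exact Subtype.ext (Prod.ext hval rfl)
  right_inv' := by
    rintro ⟨x, ζ⟩ ⟨hx, -⟩
    have hrne : rt hk x₀ x.1.1 ≠ 0 := rt_ne_zero hk x₀ _
    have hcond : (ζ.1 * rt hk x₀ x.1.1) ^ k * MvPolynomial.eval x.1.2 f = 1 := by
      rw [mul_pow, ζ.2, one_mul, rt_pow hk x₀ hx]
      simpa [pow_one] using x.2
    erw [dif_pos hcond]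
    have hpow : (ζ.1 * rt hk x₀ x.1.1) ^ k = x.1.1 := by
      rw [mul_pow, ζ.2, one_mul, rt_pow hk x₀ hx]
    have h1 : coverProj n f k ⟨(ζ.1 * rt hk x₀ x.1.1, x.1.2), hcond⟩ = x := by
      apply Subtype.ext
      show ((ζ.1 * rt hk x₀ x.1.1) ^ k, x.1.2) = x.1
      rw [hpow]
    have hval2 : ζ.1 * rt hk x₀ x.1.1 / rt hk x₀ ((ζ.1 * rt hk x₀ x.1.1) ^ k) = ζ.1 := by
      rw [hpow]
      exact mul_div_cancel_right₀ ζ.1 hrne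
    have hcond3 : (ζ.1 * rt hk x₀ x.1.1 / rt hk x₀ ((ζ.1 * rt hk x₀ x.1.1) ^ k)) ^ k = 1 := by
      rw [hval2, ζ.2]
    refine Prod.ext h1 ?_
    erw [dif_pos hcond3]
    exact Subtype.ext hval2
  open_source := (((isOpen_V x₀).preimage (continuous_fst.comp continuous_subtype_val)).preimage
    continuous_coverProj)
  open_target := ((isOpen_V x₀).preimage (continuous_fst.comp continuous_subtype_val)).prod
    isOpen_univ
  continuousOn_toFun := by
    apply ContinuousOn.prodMk (continuous_coverProj.continuousOn)
    rw [Topology.IsEmbedding.subtypeVal.isInducing.continuousOn_iff]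
    have hcont : ContinuousOn (fun q : Xf n f k => q.1.1 / rt hk x₀ (q.1.1 ^ k))
        (coverProj n f k ⁻¹' {x : Xf n f 1 | x.1.1 ∈ V x₀}) := by
      apply ContinuousOn.div
      · exact (continuous_fst.comp continuous_subtype_val).continuousOn
      · exact (continuousOn_rt hk x₀).comp
          ((continuous_fst.comp continuous_subtype_val).pow k).continuousOn
          (fun q hq => hq)
      · intro q hq
        exact rt_ne_zero hk x₀ _
    apply hcont.congr
    intro q hq
    have hv : q.1.1 ≠ 0 := v_ne_zero hk q
    have hVk : q.1.1 ^ k ∈ V x₀ := hq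
    have hcond : (q.1.1 / rt hk x₀ (q.1.1 ^ k)) ^ k = 1 := by
      rw [div_pow, rt_pow hk x₀ hVk, div_self (pow_ne_zero k hv)]
    simp only [Function.comp, dif_pos hcond]
  continuousOn_invFun := by
    refine Topology.IsEmbedding.subtypeVal.isInducing.continuousOn_iff.mpr ?_
    have hcont : ContinuousOn
        (fun p : Xf n f 1 × {ζ : ℂ // ζ ^ k = 1} => (p.2.1 * rt hk x₀ p.1.1.1, p.1.1.2))
        ({x : Xf n f 1 | x.1.1 ∈ V x₀} ×ˢ Set.univ) := by
      apply ContinuousOn.prodMk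
      · apply ContinuousOn.mul
        · exact (continuous_subtype_val.comp continuous_snd).continuousOn
        · exact (continuousOn_rt hk x₀).comp
            (continuous_fst.comp (continuous_subtype_val.comp continuous_fst)).continuousOn
            (fun p hp => hp.1)
      · exact (continuous_snd.comp (continuous_subtype_val.comp continuous_fst)).continuousOn
    apply hcont.congr
    rintro ⟨x, ζ⟩ ⟨hx, -⟩
    have hcond : (ζ.1 * rt hk x₀ x.1.1) ^ k * MvPolynomial.eval x.1.2 f = 1 := by
      rw [mul_pow, ζ.2, one_mul, rt_pow hk x₀ hx]
      simpa [pow_one] using x.2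
    exact congrArg Subtype.val (dif_pos hcond)
  baseSet := {x : Xf n f 1 | x.1.1 ∈ V x₀}
  open_baseSet := (isOpen_V x₀).preimage (continuous_fst.comp continuous_subtype_val)
  source_eq := rfl
  target_eq := rfl
  proj_toFun q _ := rfl

end CoverAux
end CoverAuxSection

/-- The map `(w,z) ↦ (w^k, z)` from `V(w^k f - 1)` to `V(w f - 1)` is a covering map
all of whose fibers have exactly `k` elements. -/
theorem coverProj_isCoveringMap (n : ℕ) (f : MvPolynomial (Fin (n + 1)) ℂ)
    (k : ℕ) (hk : 0 < k) :
    IsCoveringMap (coverProj n f k) ∧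
    ∀ x : Xf n f 1, Nat.card ((coverProj n f k) ⁻¹' {x}) = k := by
  constructor
  · haveI : Finite {ζ : ℂ // ζ ^ k = 1} := CoverAux.finite_roots hk
    exact IsCoveringMap.mk (coverProj n f k) (fun _ => {ζ : ℂ // ζ ^ k = 1})
      (fun x => CoverAux.trivAt hk x) (fun x => CoverAux.mem_V x)
  · intro x
    have e1 : ↥(coverProj n f k ⁻¹' {x}) ≃ {v : ℂ // v ^ k = x.1.1} :=
      { toFun := fun q => ⟨q.1.1.1,
          congrArg (fun y : Xf n f 1 => y.1.1) (Set.mem_singleton_iff.mp q.2)⟩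
        invFun := fun v => ⟨⟨(v.1, x.1.2), by rw [v.2]; simpa [pow_one] using x.2⟩, by
          apply Set.mem_singleton_iff.mpr
          apply Subtype.ext
          show ((v.1 : ℂ) ^ k, x.1.2) = x.1
          rw [v.2]⟩
        left_inv := fun q => by
          apply Subtype.ext; apply Subtype.ext
          exact Prod.ext rfl
            (congrArg (fun y : Xf n f 1 => y.1.2) (Set.mem_singleton_iff.mp q.2)).symm
        right_inv := fun v => rfl }
    have e2 : {v : ℂ // v ^ k = x.1.1} ≃ {ζ : ℂ // ζ ^ k = 1} :=
      { toFun := fun v => ⟨v.1 / CoverAux.c0 hk x, by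
          rw [div_pow, v.2, CoverAux.c0_pow hk x, div_self (CoverAux.w_ne_zero x)]⟩
        invFun := fun ζ => ⟨ζ.1 * CoverAux.c0 hk x, by
          rw [mul_pow, ζ.2, one_mul, CoverAux.c0_pow hk x]⟩
        left_inv := fun v => Subtype.ext (div_mul_cancel₀ v.1 (CoverAux.c0_ne_zero hk x))
        right_inv := fun ζ => Subtype.ext (mul_div_cancel_right₀ ζ.1 (CoverAux.c0_ne_zero hk x)) }
    rw [Nat.card_congr (e1.trans e2), CoverAux.card_roots hk]
end

section
/- For all t, s ∈ ℂ with t³ ≠ 27 and s³ ≠ 27, the polynomials f_t = x³ + y³ + z³ − t·xyz and f_s = x³ + y³ + z³ − s·xyz have the same Milnor number at the origin: μ(f_t) = μ(f_s). In other words, (f_t)_{t³ ≠ 27} is a μ-constant family of isolated surface singularities. -/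
open MvPolynomial

/-- The Milnor ideal of a polynomial `f`. -/
noncomputable def milnorIdeal {N : ℕ} (f : MvPolynomial (Fin N) ℂ) :
    Ideal (MvPowerSeries (Fin N) ℂ) :=
  Ideal.span (Set.range fun i : Fin N =>
    ((MvPolynomial.pderiv i f : MvPolynomial (Fin N) ℂ) : MvPowerSeries (Fin N) ℂ))

/-- The Milnor number of `f`. -/
noncomputable def milnorNumber {N : ℕ} (f : MvPolynomial (Fin N) ℂ) : ℕ :=
  Module.finrank ℂ (MvPowerSeries (Fin N) ℂ ⧸ milnorIdeal f)

/-- The cubic `x³ + y³ + z³ − t·xyz`. -/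
noncomputable def fermatCubicFamily (t : ℂ) : MvPolynomial (Fin 3) ℂ :=
  MvPolynomial.X 0 ^ 3 + MvPolynomial.X 1 ^ 3 + MvPolynomial.X 2 ^ 3 -
    MvPolynomial.C t * (MvPolynomial.X 0 * MvPolynomial.X 1 * MvPolynomial.X 2)

namespace FermatMuAux

noncomputable section

abbrev PS : Type := MvPowerSeries (Fin 3) ℂ

local notation "Xp" => (MvPowerSeries.X : Fin 3 → PS)
local notation "Cp" => (MvPowerSeries.C : ℂ →+* PS)

/-! ### Exponent vectors -/

/-- exponent vector -/
def ee (a b c : ℕ) : Fin 3 →₀ ℕ :=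
  Finsupp.single 0 a + Finsupp.single 1 b + Finsupp.single 2 c

@[simp] lemma ee_apply0 (a b c : ℕ) : ee a b c 0 = a := by
  simp [ee, Finsupp.single_apply]
@[simp] lemma ee_apply1 (a b c : ℕ) : ee a b c 1 = b := by
  simp [ee, Finsupp.single_apply]
@[simp] lemma ee_apply2 (a b c : ℕ) : ee a b c 2 = c := by
  simp [ee, Finsupp.single_apply]

lemma ee_zero : ee 0 0 0 = 0 := by simp [ee]

@[simp] lemma ee_le (a b c a' b' c' : ℕ) :
    ee a b c ≤ ee a' b' c' ↔ a ≤ a' ∧ b ≤ b' ∧ c ≤ c' := by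
  rw [Finsupp.le_def]
  constructor
  · intro h; exact ⟨by simpa using h 0, by simpa using h 1, by simpa using h 2⟩
  · rintro ⟨h1, h2, h3⟩ i; fin_cases i <;> simpa

@[simp] lemma ee_sub (a b c a' b' c' : ℕ) :
    ee a b c - ee a' b' c' = ee (a - a') (b - b') (c - c') := by
  ext i; fin_cases i <;> simp [Finsupp.tsub_apply]

@[simp] lemma ee_inj (a b c a' b' c' : ℕ) :
    ee a b c = ee a' b' c' ↔ a = a' ∧ b = b' ∧ c = c' := by
  constructor
  · intro h
    exact ⟨by rw [← ee_apply0 a b c, h]; simp, by rw [← ee_apply1 a b c, h]; simp,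
      by rw [← ee_apply2 a b c, h]; simp⟩
  · rintro ⟨rfl, rfl, rfl⟩; rfl

/-! ### Monomials -/

/-- power series monomial -/
def M (d : Fin 3 →₀ ℕ) (a : ℂ) : PS := MvPowerSeries.monomial d a

lemma M_eq_prod (a b c : ℕ) (r : ℂ) :
    M (ee a b c) r = Cp r * Xp 0 ^ a * Xp 1 ^ b * Xp 2 ^ c := by
  rw [M, ee, ← MvPowerSeries.monomial_zero_eq_C_apply, MvPowerSeries.X_pow_eq,
    MvPowerSeries.X_pow_eq, MvPowerSeries.X_pow_eq,
    MvPowerSeries.monomial_mul_monomial, MvPowerSeries.monomial_mul_monomial,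
    MvPowerSeries.monomial_mul_monomial]
  simp

lemma C_smul (a : ℂ) (p : PS) : a • p = Cp a * p := by
  rw [Algebra.smul_def, MvPowerSeries.algebraMap_apply]
  simp

/-! ### The generators of the Milnor ideal -/

def g (t : ℂ) (i : Fin 3) : PS :=
  ((MvPolynomial.pderiv i (fermatCubicFamily t) : MvPolynomial (Fin 3) ℂ) :
    MvPowerSeries (Fin 3) ℂ)

lemma gcast (t : ℂ) (i : Fin 3) :
    g t i = coeToMvPowerSeries.ringHom (pderiv i (fermatCubicFamily t)) := rfl

lemma g0_eq (t : ℂ) : g t 0 = 3 * Xp 0 ^ 2 - Cp t * (Xp 1 * Xp 2) := by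
  have h : pderiv 0 (fermatCubicFamily t) =
      3 * X 0 ^ 2 - C t * (X 1 * X 2) := by
    simp [fermatCubicFamily, pderiv_X]
    exact Or.inl (mul_comm _ _)
  rw [gcast, h, map_sub, map_mul, map_mul, map_pow, map_ofNat]
  simp

lemma g1_eq (t : ℂ) : g t 1 = 3 * Xp 1 ^ 2 - Cp t * (Xp 0 * Xp 2) := by
  have h : pderiv 1 (fermatCubicFamily t) =
      3 * X 1 ^ 2 - C t * (X 0 * X 2) := by
    simp [fermatCubicFamily, pderiv_X]
    exact Or.inl (mul_comm _ _)
  rw [gcast, h, map_sub, map_mul, map_mul, map_pow, map_ofNat]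
  simp

lemma g2_eq (t : ℂ) : g t 2 = 3 * Xp 2 ^ 2 - Cp t * (Xp 0 * Xp 1) := by
  have h : pderiv 2 (fermatCubicFamily t) =
      3 * X 2 ^ 2 - C t * (X 0 * X 1) := by
    simp [fermatCubicFamily, pderiv_X]
  rw [gcast, h, map_sub, map_mul, map_mul, map_pow, map_ofNat]
  simp

lemma g0_mon (t : ℂ) : g t 0 = M (ee 2 0 0) 3 + M (ee 0 1 1) (-t) := by
  rw [g0_eq, M_eq_prod, M_eq_prod, map_neg, map_ofNat]
  ring

lemma g1_mon (t : ℂ) : g t 1 = M (ee 0 2 0) 3 + M (ee 1 0 1) (-t) := by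
  rw [g1_eq, M_eq_prod, M_eq_prod, map_neg, map_ofNat]
  ring

lemma g2_mon (t : ℂ) : g t 2 = M (ee 0 0 2) 3 + M (ee 1 1 0) (-t) := by
  rw [g2_eq, M_eq_prod, M_eq_prod, map_neg, map_ofNat]
  ring

/-! ### The Milnor ideal -/

def Jt (t : ℂ) : Ideal PS := milnorIdeal (fermatCubicFamily t)

lemma Jt_eq (t : ℂ) : Jt t = Ideal.span (Set.range (g t)) := rfl

lemma g_mem (t : ℂ) (i : Fin 3) : g t i ∈ Jt t := by
  rw [Jt_eq]; exact Ideal.subset_span ⟨i, rfl⟩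

lemma mem_J_comb (t : ℂ) (r0 r1 r2 : PS) {p : PS}
    (hp : p = r0 * g t 0 + r1 * g t 1 + r2 * g t 2) : p ∈ Jt t := by
  rw [hp]
  exact add_mem (add_mem (Ideal.mul_mem_left _ _ (g_mem t 0))
    (Ideal.mul_mem_left _ _ (g_mem t 1))) (Ideal.mul_mem_left _ _ (g_mem t 2))

lemma mem_J_of_eq (t : ℂ) {p q : PS} (h : p ∈ Jt t) (e : q = p) : q ∈ Jt t := e ▸ h

lemma mem_J_cancel (t : ℂ) (c : ℂ) (hc : c ≠ 0) {p : PS}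
    (h : Cp c * p ∈ Jt t) : p ∈ Jt t := by
  have e : p = Cp c⁻¹ * (Cp c * p) := by
    rw [← mul_assoc, ← map_mul, inv_mul_cancel₀ hc, map_one, one_mul]
  rw [e]
  exact Ideal.mul_mem_left _ _ h

/-! ### Degree three mixed monomials lie in the ideal -/

section Monos

variable {t : ℂ}

lemma J3_210 (ht' : (27 : ℂ) - t ^ 3 ≠ 0) :
    Xp 0 ^ 2 * Xp 1 ^ 1 * Xp 2 ^ 0 ∈ Jt t := by
  refine mem_J_cancel t _ ht' (mem_J_comb t (9 * Xp 1) (3 * Cp t * Xp 2) (Cp t ^ 2 * Xp 0) ?_)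
  rw [g0_eq, g1_eq, g2_eq, map_sub, map_pow, map_ofNat]
  ring

lemma J3_021 (ht' : (27 : ℂ) - t ^ 3 ≠ 0) :
    Xp 0 ^ 0 * Xp 1 ^ 2 * Xp 2 ^ 1 ∈ Jt t := by
  refine mem_J_cancel t _ ht' (mem_J_comb t (Cp t ^ 2 * Xp 1) (9 * Xp 2) (3 * Cp t * Xp 0) ?_)
  rw [g0_eq, g1_eq, g2_eq, map_sub, map_pow, map_ofNat]
  ring

lemma J3_102 (ht' : (27 : ℂ) - t ^ 3 ≠ 0) :
    Xp 0 ^ 1 * Xp 1 ^ 0 * Xp 2 ^ 2 ∈ Jt t := by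
  refine mem_J_cancel t _ ht' (mem_J_comb t (3 * Cp t * Xp 1) (Cp t ^ 2 * Xp 2) (9 * Xp 0) ?_)
  rw [g0_eq, g1_eq, g2_eq, map_sub, map_pow, map_ofNat]
  ring

lemma J3_201 (ht' : (27 : ℂ) - t ^ 3 ≠ 0) :
    Xp 0 ^ 2 * Xp 1 ^ 0 * Xp 2 ^ 1 ∈ Jt t := by
  refine mem_J_cancel t _ ht' (mem_J_comb t (9 * Xp 2) (Cp t ^ 2 * Xp 0) (3 * Cp t * Xp 1) ?_)
  rw [g0_eq, g1_eq, g2_eq, map_sub, map_pow, map_ofNat]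
  ring

lemma J3_120 (ht' : (27 : ℂ) - t ^ 3 ≠ 0) :
    Xp 0 ^ 1 * Xp 1 ^ 2 * Xp 2 ^ 0 ∈ Jt t := by
  refine mem_J_cancel t _ ht' (mem_J_comb t (3 * Cp t * Xp 2) (9 * Xp 0) (Cp t ^ 2 * Xp 1) ?_)
  rw [g0_eq, g1_eq, g2_eq, map_sub, map_pow, map_ofNat]
  ring

lemma J3_012 (ht' : (27 : ℂ) - t ^ 3 ≠ 0) :
    Xp 0 ^ 0 * Xp 1 ^ 1 * Xp 2 ^ 2 ∈ Jt t := by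
  refine mem_J_cancel t _ ht' (mem_J_comb t (Cp t ^ 2 * Xp 2) (3 * Cp t * Xp 0) (9 * Xp 1) ?_)
  rw [g0_eq, g1_eq, g2_eq, map_sub, map_pow, map_ofNat]
  ring

/-! ### Degree four monomials lie in the ideal -/

lemma mem_J_quart (i : Fin 3) (r w : PS) (hw : w ∈ Jt t) {p : PS}
    (hp : Cp 3 * p = r * g t i + Cp t * w) : p ∈ Jt t := by
  refine mem_J_cancel t 3 (by norm_num) ?_
  rw [hp]
  exact add_mem (Ideal.mul_mem_left _ _ (g_mem t i)) (Ideal.mul_mem_left _ _ hw)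

lemma J4_400 (ht' : (27 : ℂ) - t ^ 3 ≠ 0) : Xp 0 ^ 4 * Xp 1 ^ 0 * Xp 2 ^ 0 ∈ Jt t := by
  refine mem_J_quart 0 (Xp 0 ^ 2) (Xp 0 ^ 2 * Xp 1 ^ 1 * Xp 2 ^ 0 * Xp 2)
    (Ideal.mul_mem_right _ _ (J3_210 ht')) ?_
  rw [g0_eq, map_ofNat]
  ring

lemma J4_040 (ht' : (27 : ℂ) - t ^ 3 ≠ 0) : Xp 0 ^ 0 * Xp 1 ^ 4 * Xp 2 ^ 0 ∈ Jt t := by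
  refine mem_J_quart 1 (Xp 1 ^ 2) (Xp 0 ^ 1 * Xp 1 ^ 2 * Xp 2 ^ 0 * Xp 2)
    (Ideal.mul_mem_right _ _ (J3_120 ht')) ?_
  rw [g1_eq, map_ofNat]
  ring

lemma J4_004 (ht' : (27 : ℂ) - t ^ 3 ≠ 0) : Xp 0 ^ 0 * Xp 1 ^ 0 * Xp 2 ^ 4 ∈ Jt t := by
  refine mem_J_quart 2 (Xp 2 ^ 2) (Xp 0 ^ 1 * Xp 1 ^ 0 * Xp 2 ^ 2 * Xp 1)
    (Ideal.mul_mem_right _ _ (J3_102 ht')) ?_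
  rw [g2_eq, map_ofNat]
  ring

lemma J4_310 (ht' : (27 : ℂ) - t ^ 3 ≠ 0) :
    Xp 0 ^ 3 * Xp 1 ^ 1 * Xp 2 ^ 0 ∈ Jt t := by
  refine mem_J_of_eq t (Ideal.mul_mem_right (Xp 0) _ (J3_210 ht')) ?_
  ring

lemma J4_301 (ht' : (27 : ℂ) - t ^ 3 ≠ 0) :
    Xp 0 ^ 3 * Xp 1 ^ 0 * Xp 2 ^ 1 ∈ Jt t := by
  refine mem_J_of_eq t (Ideal.mul_mem_right (Xp 0) _ (J3_201 ht')) ?_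
  ring

lemma J4_130 (ht' : (27 : ℂ) - t ^ 3 ≠ 0) :
    Xp 0 ^ 1 * Xp 1 ^ 3 * Xp 2 ^ 0 ∈ Jt t := by
  refine mem_J_of_eq t (Ideal.mul_mem_right (Xp 1) _ (J3_120 ht')) ?_
  ring

lemma J4_031 (ht' : (27 : ℂ) - t ^ 3 ≠ 0) :
    Xp 0 ^ 0 * Xp 1 ^ 3 * Xp 2 ^ 1 ∈ Jt t := by
  refine mem_J_of_eq t (Ideal.mul_mem_right (Xp 1) _ (J3_021 ht')) ?_
  ring

lemma J4_103 (ht' : (27 : ℂ) - t ^ 3 ≠ 0) :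
    Xp 0 ^ 1 * Xp 1 ^ 0 * Xp 2 ^ 3 ∈ Jt t := by
  refine mem_J_of_eq t (Ideal.mul_mem_right (Xp 2) _ (J3_102 ht')) ?_
  ring

lemma J4_013 (ht' : (27 : ℂ) - t ^ 3 ≠ 0) :
    Xp 0 ^ 0 * Xp 1 ^ 1 * Xp 2 ^ 3 ∈ Jt t := by
  refine mem_J_of_eq t (Ideal.mul_mem_right (Xp 2) _ (J3_012 ht')) ?_
  ring

lemma J4_220 (ht' : (27 : ℂ) - t ^ 3 ≠ 0) :
    Xp 0 ^ 2 * Xp 1 ^ 2 * Xp 2 ^ 0 ∈ Jt t := by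
  refine mem_J_of_eq t (Ideal.mul_mem_right (Xp 1) _ (J3_210 ht')) ?_
  ring

lemma J4_202 (ht' : (27 : ℂ) - t ^ 3 ≠ 0) :
    Xp 0 ^ 2 * Xp 1 ^ 0 * Xp 2 ^ 2 ∈ Jt t := by
  refine mem_J_of_eq t (Ideal.mul_mem_right (Xp 2) _ (J3_201 ht')) ?_
  ring

lemma J4_022 (ht' : (27 : ℂ) - t ^ 3 ≠ 0) :
    Xp 0 ^ 0 * Xp 1 ^ 2 * Xp 2 ^ 2 ∈ Jt t := by
  refine mem_J_of_eq t (Ideal.mul_mem_right (Xp 2) _ (J3_021 ht')) ?_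
  ring

lemma J4_211 (ht' : (27 : ℂ) - t ^ 3 ≠ 0) :
    Xp 0 ^ 2 * Xp 1 ^ 1 * Xp 2 ^ 1 ∈ Jt t := by
  refine mem_J_of_eq t (Ideal.mul_mem_right (Xp 2) _ (J3_210 ht')) ?_
  ring

lemma J4_121 (ht' : (27 : ℂ) - t ^ 3 ≠ 0) :
    Xp 0 ^ 1 * Xp 1 ^ 2 * Xp 2 ^ 1 ∈ Jt t := by
  refine mem_J_of_eq t (Ideal.mul_mem_right (Xp 2) _ (J3_120 ht')) ?_
  ring

lemma J4_112 (ht' : (27 : ℂ) - t ^ 3 ≠ 0) :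
    Xp 0 ^ 1 * Xp 1 ^ 1 * Xp 2 ^ 2 ∈ Jt t := by
  refine mem_J_of_eq t (Ideal.mul_mem_right (Xp 1) _ (J3_102 ht')) ?_
  ring

set_option maxHeartbeats 1000000 in
lemma level4 (t : ℂ) (ht' : (27 : ℂ) - t ^ 3 ≠ 0) :
    ∀ a b c : ℕ, a + b + c = 4 → Xp 0 ^ a * Xp 1 ^ b * Xp 2 ^ c ∈ Jt t := by
  intro a b c habc
  have ha : a ≤ 4 := by omega
  have hb : b ≤ 4 := by omega
  have hc : c ≤ 4 := by omega
  interval_cases a <;> interval_cases b <;> interval_cases c <;> try (exfalso; omega)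
  · exact J4_004 ht'
  · exact J4_013 ht'
  · exact J4_022 ht'
  · exact J4_031 ht'
  · exact J4_040 ht'
  · exact J4_103 ht'
  · exact J4_112 ht'
  · exact J4_121 ht'
  · exact J4_130 ht'
  · exact J4_202 ht'
  · exact J4_211 ht'
  · exact J4_220 ht'
  · exact J4_301 ht'
  · exact J4_310 ht'
  · exact J4_400 ht'

/-! ### The spanning submodule -/

def bexp : Fin 8 → (Fin 3 →₀ ℕ) :=
  ![ee 0 0 0, ee 1 0 0, ee 0 1 0, ee 0 0 1, ee 1 1 0, ee 0 1 1, ee 1 0 1, ee 1 1 1]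

@[simp] lemma bexp0 : bexp 0 = ee 0 0 0 := rfl
@[simp] lemma bexp1 : bexp 1 = ee 1 0 0 := rfl
@[simp] lemma bexp2 : bexp 2 = ee 0 1 0 := rfl
@[simp] lemma bexp3 : bexp 3 = ee 0 0 1 := rfl
@[simp] lemma bexp4 : bexp 4 = ee 1 1 0 := rfl
@[simp] lemma bexp5 : bexp 5 = ee 0 1 1 := rfl
@[simp] lemma bexp6 : bexp 6 = ee 1 0 1 := rfl
@[simp] lemma bexp7 : bexp 7 = ee 1 1 1 := rfl

def bmon (j : Fin 8) : PS := M (bexp j) 1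

lemma bmon0_eq : bmon 0 = 1 := by rw [bmon, bexp0, M_eq_prod]; simp
lemma bmon1_eq : bmon 1 = Xp 0 := by rw [bmon, bexp1, M_eq_prod]; simp
lemma bmon2_eq : bmon 2 = Xp 1 := by rw [bmon, bexp2, M_eq_prod]; simp
lemma bmon3_eq : bmon 3 = Xp 2 := by rw [bmon, bexp3, M_eq_prod]; simp
lemma bmon4_eq : bmon 4 = Xp 0 * Xp 1 := by rw [bmon, bexp4, M_eq_prod]; simp
lemma bmon5_eq : bmon 5 = Xp 1 * Xp 2 := by rw [bmon, bexp5, M_eq_prod]; simp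
lemma bmon6_eq : bmon 6 = Xp 0 * Xp 2 := by rw [bmon, bexp6, M_eq_prod]; simp
lemma bmon7_eq : bmon 7 = Xp 0 * Xp 1 * Xp 2 := by
  rw [bmon, bexp7, M_eq_prod]; simp [mul_assoc]

def Tt (t : ℂ) : Submodule ℂ PS :=
  Submodule.span ℂ (Set.range bmon) ⊔ (Jt t).restrictScalars ℂ

lemma bmon_mem (t : ℂ) (j : Fin 8) : bmon j ∈ Tt t :=
  Submodule.mem_sup_left (Submodule.subset_span ⟨j, rfl⟩)

lemma mem_T_J {p : PS} (h : p ∈ Jt t) : p ∈ Tt t :=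
  Submodule.mem_sup_right h

lemma mem_T_of_eq (t : ℂ) {p q : PS} (h : p ∈ Tt t) (e : q = p) : q ∈ Tt t := e ▸ h

lemma mem_T_cancel3 (t : ℂ) {p : PS} (h : Cp 3 * p ∈ Tt t) : p ∈ Tt t := by
  rw [← C_smul] at h
  exact (Submodule.smul_mem_iff _ (by norm_num : (3 : ℂ) ≠ 0)).mp h

lemma mem_T_comb (t : ℂ) (r : PS) (i : Fin 3) (j : Fin 8) {p : PS}
    (hp : Cp 3 * p = r * g t i + Cp t * bmon j) : p ∈ Tt t := by
  refine mem_T_cancel3 t ?_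
  rw [hp]
  refine add_mem (mem_T_J (Ideal.mul_mem_left _ _ (g_mem t i))) ?_
  rw [← C_smul]
  exact Submodule.smul_mem _ _ (bmon_mem t j)

lemma TB_000 : Xp 0 ^ 0 * Xp 1 ^ 0 * Xp 2 ^ 0 ∈ Tt t := by
  refine mem_T_of_eq t (bmon_mem t 0) ?_
  rw [bmon0_eq]; ring

lemma TB_100 : Xp 0 ^ 1 * Xp 1 ^ 0 * Xp 2 ^ 0 ∈ Tt t := by
  refine mem_T_of_eq t (bmon_mem t 1) ?_
  rw [bmon1_eq]; ring

lemma TB_010 : Xp 0 ^ 0 * Xp 1 ^ 1 * Xp 2 ^ 0 ∈ Tt t := by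
  refine mem_T_of_eq t (bmon_mem t 2) ?_
  rw [bmon2_eq]; ring

lemma TB_001 : Xp 0 ^ 0 * Xp 1 ^ 0 * Xp 2 ^ 1 ∈ Tt t := by
  refine mem_T_of_eq t (bmon_mem t 3) ?_
  rw [bmon3_eq]; ring

lemma TB_110 : Xp 0 ^ 1 * Xp 1 ^ 1 * Xp 2 ^ 0 ∈ Tt t := by
  refine mem_T_of_eq t (bmon_mem t 4) ?_
  rw [bmon4_eq]; ring

lemma TB_011 : Xp 0 ^ 0 * Xp 1 ^ 1 * Xp 2 ^ 1 ∈ Tt t := by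
  refine mem_T_of_eq t (bmon_mem t 5) ?_
  rw [bmon5_eq]; ring

lemma TB_101 : Xp 0 ^ 1 * Xp 1 ^ 0 * Xp 2 ^ 1 ∈ Tt t := by
  refine mem_T_of_eq t (bmon_mem t 6) ?_
  rw [bmon6_eq]; ring

lemma TB_111 : Xp 0 ^ 1 * Xp 1 ^ 1 * Xp 2 ^ 1 ∈ Tt t := by
  refine mem_T_of_eq t (bmon_mem t 7) ?_
  rw [bmon7_eq]; ring

lemma TB_200 : Xp 0 ^ 2 * Xp 1 ^ 0 * Xp 2 ^ 0 ∈ Tt t := by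
  refine mem_T_comb t 1 0 5 ?_
  rw [g0_eq, bmon5_eq, map_ofNat]
  ring

lemma TB_020 : Xp 0 ^ 0 * Xp 1 ^ 2 * Xp 2 ^ 0 ∈ Tt t := by
  refine mem_T_comb t 1 1 6 ?_
  rw [g1_eq, bmon6_eq, map_ofNat]
  ring

lemma TB_002 : Xp 0 ^ 0 * Xp 1 ^ 0 * Xp 2 ^ 2 ∈ Tt t := by
  refine mem_T_comb t 1 2 4 ?_
  rw [g2_eq, bmon4_eq, map_ofNat]
  ring

lemma TB_300 : Xp 0 ^ 3 * Xp 1 ^ 0 * Xp 2 ^ 0 ∈ Tt t := by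
  refine mem_T_comb t (Xp 0) 0 7 ?_
  rw [g0_eq, bmon7_eq, map_ofNat]
  ring

lemma TB_030 : Xp 0 ^ 0 * Xp 1 ^ 3 * Xp 2 ^ 0 ∈ Tt t := by
  refine mem_T_comb t (Xp 1) 1 7 ?_
  rw [g1_eq, bmon7_eq, map_ofNat]
  ring

lemma TB_003 : Xp 0 ^ 0 * Xp 1 ^ 0 * Xp 2 ^ 3 ∈ Tt t := by
  refine mem_T_comb t (Xp 2) 2 7 ?_
  rw [g2_eq, bmon7_eq, map_ofNat]
  ring

set_option maxHeartbeats 1000000 in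
lemma mono_T (t : ℂ) (ht' : (27 : ℂ) - t ^ 3 ≠ 0) :
    ∀ a b c : ℕ, a + b + c ≤ 3 → Xp 0 ^ a * Xp 1 ^ b * Xp 2 ^ c ∈ Tt t := by
  intro a b c habc
  have ha : a ≤ 3 := by omega
  have hb : b ≤ 3 := by omega
  have hc : c ≤ 3 := by omega
  interval_cases a <;> interval_cases b <;> interval_cases c <;> try (exfalso; omega)
  · exact TB_000
  · exact TB_001
  · exact TB_002
  · exact TB_003
  · exact TB_010
  · exact TB_011
  · exact mem_T_J (J3_012 ht')
  · exact TB_020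
  · exact mem_T_J (J3_021 ht')
  · exact TB_030
  · exact TB_100
  · exact TB_101
  · exact mem_T_J (J3_102 ht')
  · exact TB_110
  · exact TB_111
  · exact mem_T_J (J3_120 ht')
  · exact TB_200
  · exact mem_T_J (J3_201 ht')
  · exact mem_T_J (J3_210 ht')
  · exact TB_300

lemma exists_decomp (h : PS) :
    ∃ (c : ℂ) (h0 h1 h2 : PS), h = Cp c + Xp 0 * h0 + Xp 1 * h1 + Xp 2 * h2 := by
  classical
  refine ⟨MvPowerSeries.coeff 0 h,
    (fun d => MvPowerSeries.coeff (d + Finsupp.single 0 1) h),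
    (fun d => if d 0 = 0 then MvPowerSeries.coeff (d + Finsupp.single 1 1) h else 0),
    (fun d => if d 0 = 0 ∧ d 1 = 0 then MvPowerSeries.coeff (d + Finsupp.single 2 1) h
      else 0), ?_⟩
  ext d
  rw [map_add, map_add, map_add]
  erw [MvPowerSeries.X, MvPowerSeries.X, MvPowerSeries.X,
    MvPowerSeries.coeff_monomial_mul, MvPowerSeries.coeff_monomial_mul,
    MvPowerSeries.coeff_monomial_mul, MvPowerSeries.coeff_C]
  simp only [Finsupp.single_le_iff, Nat.one_le_iff_ne_zero, one_mul]
  have hco : ∀ (f : (Fin 3 →₀ ℕ) → ℂ) (n : Fin 3 →₀ ℕ),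
      MvPowerSeries.coeff n (f : MvPowerSeries (Fin 3) ℂ) = f n := fun f n => rfl
  have happ : ∀ (n : Fin 3 →₀ ℕ), MvPowerSeries.coeff n h = h n := fun n => rfl
  simp only [hco, happ]
  have k : ∀ i : Fin 3, d i ≠ 0 → d - Finsupp.single i 1 + Finsupp.single i 1 = d :=
    fun i hi => tsub_add_cancel_of_le (Finsupp.single_le_iff.mpr (Nat.one_le_iff_ne_zero.mpr hi))
  by_cases h0 : d 0 = 0 <;> by_cases h1 : d 1 = 0 <;> by_cases h2 : d 2 = 0
  · have hd : d = 0 := by ext i; fin_cases i <;> simp [h0, h1, h2]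
    simp [hd]
  · have hd : d ≠ 0 := fun hh => h2 (by simp [hh])
    simp [hd, h0, h1, h2, Finsupp.tsub_apply, Finsupp.single_apply, k 2 h2]
  · have hd : d ≠ 0 := fun hh => h1 (by simp [hh])
    simp [hd, h0, h1, h2, Finsupp.tsub_apply, Finsupp.single_apply, k 1 h1]
  · have hd : d ≠ 0 := fun hh => h1 (by simp [hh])
    simp [hd, h0, h1, h2, Finsupp.tsub_apply, Finsupp.single_apply, k 1 h1, k 2 h2]
  · have hd : d ≠ 0 := fun hh => h0 (by simp [hh])
    simp [hd, h0, h1, h2, Finsupp.tsub_apply, Finsupp.single_apply, k 0 h0]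
  · have hd : d ≠ 0 := fun hh => h0 (by simp [hh])
    simp [hd, h0, h1, h2, Finsupp.tsub_apply, Finsupp.single_apply, k 0 h0, k 2 h2]
  · have hd : d ≠ 0 := fun hh => h0 (by simp [hh])
    simp [hd, h0, h1, h2, Finsupp.tsub_apply, Finsupp.single_apply, k 0 h0, k 1 h1]
  · have hd : d ≠ 0 := fun hh => h0 (by simp [hh])
    simp [hd, h0, h1, h2, Finsupp.tsub_apply, Finsupp.single_apply, k 0 h0, k 1 h1, k 2 h2]

lemma levels (t : ℂ) (ht' : (27 : ℂ) - t ^ 3 ≠ 0) :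
    ∀ k : ℕ, k ≤ 4 → ∀ a b c : ℕ, ∀ h : PS, a + b + c + k = 4 →
      Xp 0 ^ a * Xp 1 ^ b * Xp 2 ^ c * h ∈ Tt t := by
  intro k
  induction k with
  | zero =>
      intro _ a b c h habc
      exact mem_T_J (Ideal.mul_mem_right _ _ (level4 t ht' a b c (by omega)))
  | succ n IH =>
      intro hn a b c h habc
      obtain ⟨c0, h0, h1, h2, rfl⟩ := exists_decomp h
      have e : Xp 0 ^ a * Xp 1 ^ b * Xp 2 ^ c * (Cp c0 + Xp 0 * h0 + Xp 1 * h1 + Xp 2 * h2)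
          = Cp c0 * (Xp 0 ^ a * Xp 1 ^ b * Xp 2 ^ c)
            + Xp 0 ^ (a + 1) * Xp 1 ^ b * Xp 2 ^ c * h0
            + Xp 0 ^ a * Xp 1 ^ (b + 1) * Xp 2 ^ c * h1
            + Xp 0 ^ a * Xp 1 ^ b * Xp 2 ^ (c + 1) * h2 := by
        ring
      rw [e]
      refine add_mem (add_mem (add_mem ?_ ?_) ?_) ?_
      · rw [← C_smul]
        exact Submodule.smul_mem _ _ (mono_T t ht' a b c (by omega))
      · exact IH (by omega) (a + 1) b c h0 (by omega)
      · exact IH (by omega) a (b + 1) c h1 (by omega)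
      · exact IH (by omega) a b (c + 1) h2 (by omega)

lemma T_top (t : ℂ) (ht' : (27 : ℂ) - t ^ 3 ≠ 0) : Tt t = ⊤ := by
  rw [Submodule.eq_top_iff']
  intro h
  have := levels t ht' 4 le_rfl 0 0 0 h rfl
  simpa using this

/-! ### The dual functionals -/

def lam (t : ℂ) : Fin 8 → (PS →ₗ[ℂ] ℂ) :=
  ![MvPowerSeries.coeff (ee 0 0 0),
    MvPowerSeries.coeff (ee 1 0 0),
    MvPowerSeries.coeff (ee 0 1 0),
    MvPowerSeries.coeff (ee 0 0 1),
    MvPowerSeries.coeff (ee 1 1 0) + (t / 3) • MvPowerSeries.coeff (ee 0 0 2),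
    MvPowerSeries.coeff (ee 0 1 1) + (t / 3) • MvPowerSeries.coeff (ee 2 0 0),
    MvPowerSeries.coeff (ee 1 0 1) + (t / 3) • MvPowerSeries.coeff (ee 0 2 0),
    MvPowerSeries.coeff (ee 1 1 1) + (t / 3) • (MvPowerSeries.coeff (ee 3 0 0)
      + MvPowerSeries.coeff (ee 0 3 0) + MvPowerSeries.coeff (ee 0 0 3))]

@[simp] lemma lam_a0 (t : ℂ) : lam t 0 = MvPowerSeries.coeff (ee 0 0 0) := rfl
@[simp] lemma lam_a1 (t : ℂ) : lam t 1 = MvPowerSeries.coeff (ee 1 0 0) := rfl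
@[simp] lemma lam_a2 (t : ℂ) : lam t 2 = MvPowerSeries.coeff (ee 0 1 0) := rfl
@[simp] lemma lam_a3 (t : ℂ) : lam t 3 = MvPowerSeries.coeff (ee 0 0 1) := rfl
@[simp] lemma lam_a4 (t : ℂ) : lam t 4 = MvPowerSeries.coeff (ee 1 1 0)
    + (t / 3) • MvPowerSeries.coeff (ee 0 0 2) := rfl
@[simp] lemma lam_a5 (t : ℂ) : lam t 5 = MvPowerSeries.coeff (ee 0 1 1)
    + (t / 3) • MvPowerSeries.coeff (ee 2 0 0) := rfl
@[simp] lemma lam_a6 (t : ℂ) : lam t 6 = MvPowerSeries.coeff (ee 1 0 1)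
    + (t / 3) • MvPowerSeries.coeff (ee 0 2 0) := rfl
@[simp] lemma lam_a7 (t : ℂ) : lam t 7 = MvPowerSeries.coeff (ee 1 1 1)
    + (t / 3) • (MvPowerSeries.coeff (ee 3 0 0)
      + MvPowerSeries.coeff (ee 0 3 0) + MvPowerSeries.coeff (ee 0 0 3)) := rfl

lemma lam_mul_g (t : ℂ) (j : Fin 8) (i : Fin 3) (r : PS) : lam t j (r * g t i) = 0 := by
  fin_cases i
  · rw [show (⟨0, by norm_num⟩ : Fin 3) = 0 from rfl, g0_mon]
    fin_cases j <;>
      simp [M, mul_add, MvPowerSeries.coeff_mul_monomial] <;> ring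
  · rw [show (⟨1, by norm_num⟩ : Fin 3) = 1 from rfl, g1_mon]
    fin_cases j <;>
      simp [M, mul_add, MvPowerSeries.coeff_mul_monomial] <;> ring
  · rw [show (⟨2, by norm_num⟩ : Fin 3) = 2 from rfl, g2_mon]
    fin_cases j <;>
      simp [M, mul_add, MvPowerSeries.coeff_mul_monomial] <;> ring

lemma lam_vanish (t : ℂ) (j : Fin 8) {p : PS} (hp : p ∈ Jt t) : lam t j p = 0 := by
  rw [Jt_eq] at hp
  rw [Ideal.span, Submodule.mem_span_range_iff_exists_fun] at hp
  obtain ⟨cf, hcf⟩ := hp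
  rw [← hcf, map_sum]
  refine Finset.sum_eq_zero fun i _ => ?_
  rw [smul_eq_mul]
  exact lam_mul_g t j i (cf i)

lemma lam_bmon (t : ℂ) (j k : Fin 8) : lam t j (bmon k) = if j = k then 1 else 0 := by
  fin_cases j <;> fin_cases k <;>
    simp [bmon, M, MvPowerSeries.coeff_monomial]

end Monos

/-! ### The Milnor number is 8 -/

set_option synthInstance.maxHeartbeats 400000 in
lemma mu_eq_eight (t : ℂ) (ht : t ^ 3 ≠ 27) :
    milnorNumber (fermatCubicFamily t) = 8 := by
  have ht' : (27 : ℂ) - t ^ 3 ≠ 0 := sub_ne_zero.mpr (Ne.symm ht)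
  classical
  set J := milnorIdeal (fermatCubicFamily t) with hJ
  let mkl : PS →ₗ[ℂ] (PS ⧸ J) := (Ideal.Quotient.mkₐ ℂ J).toLinearMap
  have hmk0 : ∀ p : PS, p ∈ Jt t → mkl p = 0 := fun p hp =>
    (Ideal.Quotient.eq_zero_iff_mem (I := J)).mpr hp
  -- linear independence of the images of the eight monomials
  have hli : LinearIndependent ℂ (fun j => mkl (bmon j)) := by
    rw [Fintype.linearIndependent_iff]
    intro cf hcf j
    have hsum : mkl (∑ k, cf k • bmon k) = 0 := by
      rw [map_sum]
      simpa using hcf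
    have hmem : (∑ k, cf k • bmon k) ∈ Jt t :=
      (Ideal.Quotient.eq_zero_iff_mem (I := J)).mp hsum
    have hv := lam_vanish t j hmem
    rw [map_sum] at hv
    simp only [map_smul, lam_bmon, smul_eq_mul] at hv
    simpa [Finset.mul_sum, Finset.sum_ite_eq] using hv
  -- the images span
  have hsp : ⊤ ≤ Submodule.span ℂ (Set.range fun j => mkl (bmon j)) := by
    intro q _
    obtain ⟨p, rfl⟩ : ∃ p, mkl p = q := by
      obtain ⟨p, hp⟩ := Ideal.Quotient.mk_surjective (I := J) q
      exact ⟨p, hp⟩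
    have hpT : p ∈ Tt t := by rw [T_top t ht']; trivial
    rw [Tt, Submodule.mem_sup] at hpT
    obtain ⟨u, hu, v, hv, rfl⟩ := hpT
    rw [map_add, hmk0 v hv, add_zero]
    have : mkl u ∈ Submodule.map mkl (Submodule.span ℂ (Set.range bmon)) :=
      Submodule.mem_map_of_mem hu
    rwa [Submodule.map_span, ← Set.range_comp] at this
  let b : Module.Basis (Fin 8) ℂ (PS ⧸ J) := Module.Basis.mk hli hsp
  rw [milnorNumber]
  rw [Module.finrank_eq_card_basis b, Fintype.card_fin]

end

end FermatMuAux

/-- The family `x³ + y³ + z³ − t·xyz`, `t³ ≠ 27`, is a μ-constant family. -/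
theorem fermatCubicFamily_mu_constant (t s : ℂ) (ht : t ^ 3 ≠ 27) (hs : s ^ 3 ≠ 27) :
    milnorNumber (fermatCubicFamily t) = milnorNumber (fermatCubicFamily s) := by
  rw [FermatMuAux.mu_eq_eight t ht, FermatMuAux.mu_eq_eight s hs]
end
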